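/- Let P be the n×n dual complex matrix with P_{i,i+1} = 1 for i = 1,…,n−1, P_{n,1} = p for a unit dual complex number p = e^{iθ}, and zeros elsewhere. Then the eigenvalues of the dual complex Hermitian matrix A = P + P* are exactly 2cos((θ + 2πj)/n) for j = 0,…,n−1, where cos is the dual cosine function. -/

import Mathlib

open TrivSqZeroExt

noncomputable section

/-- The dual exponential `e^{iθ}` of a dual angle `θ = θ_s + θ_d ε`. -/
def dcexp (θ : DualNumber ℝ) : DualNumber ℂ :=
  inl (Complex.exp (Complex.I * (θ.fst : ℂ))) +
    inr (Complex.I * (θ.snd : ℂ) * Complex.exp (Complex.I * (θ.fst : ℂ)))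

/-- Conjugate of a dual complex number. -/
def dstar (p : DualNumber ℂ) : DualNumber ℂ :=
  inl ((starRingEnd ℂ) p.fst) + inr ((starRingEnd ℂ) p.snd)

/-- The `n×n` dual complex matrix `P` with `P_{i,i+1} = 1` for `i = 1,…,n-1`,
`P_{n,1} = p`, and zeros elsewhere. -/
def cycMat (n : ℕ) (p : DualNumber ℂ) : Matrix (Fin n) (Fin n) (DualNumber ℂ) :=
  fun i j =>
    if (j : ℕ) = (i : ℕ) + 1 then 1
    else if (i : ℕ) = n - 1 ∧ (j : ℕ) = 0 then p else 0

/-- Conjugate transpose of a dual complex matrix. -/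
def dconjT {m n : Type*} (M : Matrix m n (DualNumber ℂ)) : Matrix n m (DualNumber ℂ) :=
  fun i j => dstar (M j i)

namespace CycProof

@[simp] lemma dstar_fst (p : DualNumber ℂ) : (dstar p).fst = (starRingEnd ℂ) p.fst := by
  simp [dstar]

@[simp] lemma dstar_snd (p : DualNumber ℂ) : (dstar p).snd = (starRingEnd ℂ) p.snd := by
  simp [dstar]

lemma dual_ext {a b : DualNumber ℂ} (h1 : a.fst = b.fst) (h2 : a.snd = b.snd) : a = b :=
  TrivSqZeroExt.ext h1 h2

@[simp] lemma snd_mul' (a b : DualNumber ℂ) : (a*b).snd = a.fst * b.snd + a.snd * b.fst := by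
  rw [snd_mul]; simp [smul_eq_mul]

@[simp] lemma dstar_one : dstar 1 = 1 := by
  apply dual_ext <;> simp

@[simp] lemma dstar_zero : dstar 0 = 0 := by
  apply dual_ext <;> simp

lemma dstar_mul (a b : DualNumber ℂ) : dstar (a*b) = dstar a * dstar b := by
  apply dual_ext <;> simp <;> ring

lemma dstar_pow (a : DualNumber ℂ) (k : ℕ) : dstar (a^k) = (dstar a)^k := by
  induction k with
  | zero => simpa using dstar_one
  | succ k ih => rw [pow_succ, dstar_mul, ih, pow_succ]

lemma add_pow_dual (a b : ℂ) (k : ℕ) :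
    ((inl a + inr b : DualNumber ℂ))^k = inl (a^k) + inr ((k:ℂ) * a^(k-1) * b) := by
  induction k with
  | zero => apply dual_ext <;> simp
  | succ k ih =>
      rw [pow_succ, ih]
      apply dual_ext
      · simp [pow_succ]
      · simp only [snd_mul', fst_add, fst_inl, fst_inr, snd_add, snd_inl, snd_inr, add_zero,
          zero_add]
        rcases Nat.eq_zero_or_pos k with hk | hk
        · subst hk; simp
        · have : a ^ (k-1) * a = a ^ k := by
            rw [← pow_succ]; congr 1; omega
          push_cast
          calc a ^ k * b + ((k:ℂ) * a^(k-1) * b) * a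
              = a ^ k * b + (k:ℂ) * (a^(k-1)*a) * b := by ring
            _ = ((k:ℂ)+1) * a ^ k * b := by rw [this]; ring

lemma dual_cancel {a b c : DualNumber ℂ} (hc : c.fst ≠ 0) (h : a * c = b * c) : a = b := by
  have h1 : a.fst * c.fst = b.fst * c.fst := by
    have := congrArg TrivSqZeroExt.fst h; simpa using this
  have hf : a.fst = b.fst := mul_right_cancel₀ hc h1
  have h2 := congrArg TrivSqZeroExt.snd h
  simp only [snd_mul'] at h2
  rw [hf] at h2
  have : a.snd * c.fst = b.snd * c.fst := by
    have := h2; linear_combination this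
  exact dual_ext hf (mul_right_cancel₀ hc this)


-- row identity, abstract
lemma row_id (n i : ℕ) (hi : i < n)
    (ω ω' w w' p p' : DualNumber ℂ) (hω : ω*ω' = 1) (hw : w*w' = 1)
    (hwn : w^n = 1) (hp : p = ω^n) (hp' : p' = ω'^n) :
    (if i+1 < n then (ω*w)^(i+1) else 0) + (if i = n-1 then p * (ω*w)^0 else 0)
      + (if 0 < i then (ω*w)^(i-1) else 0) + (if i = 0 then p' * (ω*w)^(n-1) else 0)
    = (ω*w)^i * (ω*w + ω'*w') := by
  by_cases h0 : i = 0 <;> by_cases hlast : i = n - 1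
  · -- n = 1
    have hn1 : n = 1 := by omega
    subst h0; subst hn1
    have hw1 : w = 1 := by simpa using hwn
    have hw'1 : w' = 1 := by rw [hw1, one_mul] at hw; exact hw
    simp [hp, hp', hw1, hw'1]
  · -- i = 0, n ≥ 2
    obtain ⟨m, rfl⟩ : ∃ m, n = m + 2 := ⟨n - 2, by omega⟩
    subst h0
    have c1 : 0 + 1 < m + 2 := by omega
    have c2 : ¬ (0 = m + 2 - 1) := by omega
    have c3 : ¬ (0 < 0) := by omega
    rw [if_pos c1, if_neg c2, if_neg c3, if_pos rfl]
    have hB : (ω*ω')^(m+1) = 1 := by rw [hω, one_pow]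
    have hwn' : w^(m+2) = 1 := hwn
    have hC : w^(m+1) = w' := by
      calc w^(m+1) = w^(m+1) * (w * w') := by rw [hw, mul_one]
        _ = w^(m+2) * w' := by ring
        _ = w' := by rw [hwn', one_mul]
    have key : p' * (ω*w)^(m+2-1) = ω'*w' := by
      have : m + 2 - 1 = m + 1 := by omega
      rw [this, hp']
      calc ω'^(m+2) * (ω*w)^(m+1) = ω' * ((ω*ω')^(m+1) * w^(m+1)) := by ring
        _ = ω' * w' := by rw [hB, one_mul, hC]
    rw [key]; ring
  · -- i = n-1, i > 0, n ≥ 2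
    obtain ⟨m, rfl⟩ : ∃ m, n = m + 2 := ⟨n - 2, by omega⟩
    have him : i = m + 1 := by omega
    subst him
    have c1 : ¬ (m + 1 + 1 < m + 2) := by omega
    have c3 : 0 < m + 1 := by omega
    have c4 : ¬ (m + 1 = 0) := by omega
    rw [if_neg c1, if_pos hlast, if_pos c3, if_neg c4, Nat.add_sub_cancel]
    have hD : (ω*w)^(m+2) = p := by
      rw [mul_pow, hwn, mul_one, hp]
    have hE : (ω*w)^(m+1)*(ω'*w') = (ω*w)^m := by
      calc (ω*w)^(m+1)*(ω'*w') = (ω*w)^m * ((ω*ω')*(w*w')) := by ring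
        _ = (ω*w)^m := by rw [hω, hw, mul_one, mul_one]
    linear_combination -hD - hE
  · -- interior
    have c1 : i + 1 < n := by omega
    have c3 : 0 < i := by omega
    rw [if_pos c1, if_neg hlast, if_pos c3, if_neg h0]
    obtain ⟨m, rfl⟩ : ∃ m, i = m + 1 := ⟨i - 1, by omega⟩
    rw [Nat.add_sub_cancel]
    have hE : (ω*w)^(m+1)*(ω'*w') = (ω*w)^m := by
      calc (ω*w)^(m+1)*(ω'*w') = (ω*w)^m * ((ω*ω')*(w*w')) := by ring
        _ = (ω*w)^m := by rw [hω, hw, mul_one, mul_one]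
    linear_combination -hE

lemma sum_ite_val {n : ℕ} (c : ℕ) (f : Fin n → DualNumber ℂ) :
    (∑ m : Fin n, if (m:ℕ) = c then f m else 0) = if h : c < n then f ⟨c,h⟩ else 0 := by
  split
  · next h =>
      rw [Finset.sum_eq_single (⟨c, h⟩ : Fin n)]
      · simp
      · intro b _ hb
        rw [if_neg]
        simpa [Fin.ext_iff] using hb
      · simp
  · next h =>
      apply Finset.sum_eq_zero
      intro m _
      rw [if_neg]
      have := m.isLt; omega

lemma entry_expand (n : ℕ) (p : DualNumber ℂ) (x : Fin n → DualNumber ℂ) (i m : Fin n) :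
    (cycMat n p + dconjT (cycMat n p)) i m * x m =
      (if (m:ℕ) = (i:ℕ)+1 then x m else 0)
      + (if (i:ℕ) = n-1 then (if (m:ℕ) = 0 then p * x m else 0) else 0)
      + (if (i:ℕ) = (m:ℕ)+1 then x m else 0)
      + (if (i:ℕ) = 0 then (if (m:ℕ) = n-1 then dstar p * x m else 0) else 0) := by
  simp only [Matrix.add_apply, cycMat, dconjT]
  split_ifs <;>
    simp only [dstar_one, dstar_zero, one_mul, zero_mul, add_zero, zero_add, mul_zero] <;>
    first | (exfalso; omega) | rfl | ring1

lemma mulVec_A (n : ℕ) (hn : 0 < n) (p : DualNumber ℂ) (x : Fin n → DualNumber ℂ) (i : Fin n) :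
    ((cycMat n p + dconjT (cycMat n p)).mulVec x) i =
      (if h : (i:ℕ)+1 < n then x ⟨(i:ℕ)+1, h⟩ else 0)
        + (if (i:ℕ) = n-1 then p * x ⟨0, hn⟩ else 0)
        + (if h : 0 < (i:ℕ) then x ⟨(i:ℕ)-1, lt_of_le_of_lt (Nat.sub_le _ _) i.isLt⟩ else 0)
        + (if (i:ℕ) = 0 then dstar p * x ⟨n-1, Nat.sub_lt hn Nat.one_pos⟩ else 0) := by
  rw [Matrix.mulVec, dotProduct]
  rw [Finset.sum_congr rfl (fun m _ => entry_expand n p x i m)]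
  rw [Finset.sum_add_distrib, Finset.sum_add_distrib, Finset.sum_add_distrib]
  congr 1; congr 1; congr 1
  · rw [sum_ite_val]
  · by_cases h : (i:ℕ) = n - 1
    · simp only [if_pos h]
      rw [sum_ite_val, dif_pos hn]
    · simp only [if_neg h, Finset.sum_const_zero]
  · by_cases h : 0 < (i:ℕ)
    · rw [dif_pos h]
      have : ∀ m : Fin n, (if (i:ℕ) = (m:ℕ)+1 then x m else 0)
          = (if (m:ℕ) = (i:ℕ)-1 then x m else 0) := by
        intro m; congr 1
        simp only [eq_iff_iff]; omega
      rw [Finset.sum_congr rfl (fun m _ => this m), sum_ite_val,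
        dif_pos (lt_of_le_of_lt (Nat.sub_le _ _) i.isLt)]
    · rw [dif_neg h]
      apply Finset.sum_eq_zero
      intro m _
      rw [if_neg]; omega
  · by_cases h : (i:ℕ) = 0
    · simp only [if_pos h]
      rw [sum_ite_val, dif_pos (Nat.sub_lt hn Nat.one_pos)]
    · simp only [if_neg h, Finset.sum_const_zero]

lemma entry_expandT (n : ℕ) (p : DualNumber ℂ) (w : Fin n → DualNumber ℂ) (m k : Fin n) :
    (cycMat n p + dconjT (cycMat n p)) k m * w k =
      (if (m:ℕ) = (k:ℕ)+1 then w k else 0)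
      + (if (m:ℕ) = 0 then (if (k:ℕ) = n-1 then p * w k else 0) else 0)
      + (if (k:ℕ) = (m:ℕ)+1 then w k else 0)
      + (if (m:ℕ) = n-1 then (if (k:ℕ) = 0 then dstar p * w k else 0) else 0) := by
  simp only [Matrix.add_apply, cycMat, dconjT]
  split_ifs <;>
    simp only [dstar_one, dstar_zero, one_mul, zero_mul, add_zero, zero_add,
      mul_zero] <;>
    first | (exfalso; omega) | rfl | ring1

lemma sum_At (n : ℕ) (hn : 0 < n) (p : DualNumber ℂ) (w : Fin n → DualNumber ℂ) (m : Fin n) :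
    (∑ k : Fin n, (cycMat n p + dconjT (cycMat n p)) k m * w k) =
      (if h : 0 < (m:ℕ) then w ⟨(m:ℕ)-1, lt_of_le_of_lt (Nat.sub_le _ _) m.isLt⟩ else 0)
        + (if (m:ℕ) = 0 then p * w ⟨n-1, Nat.sub_lt hn Nat.one_pos⟩ else 0)
        + (if h : (m:ℕ)+1 < n then w ⟨(m:ℕ)+1, h⟩ else 0)
        + (if (m:ℕ) = n-1 then dstar p * w ⟨0, hn⟩ else 0) := by
  rw [Finset.sum_congr rfl (fun k _ => entry_expandT n p w m k)]
  rw [Finset.sum_add_distrib, Finset.sum_add_distrib, Finset.sum_add_distrib]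
  congr 1; congr 1; congr 1
  · by_cases h : 0 < (m:ℕ)
    · rw [dif_pos h]
      have : ∀ k : Fin n, (if (m:ℕ) = (k:ℕ)+1 then w k else 0)
          = (if (k:ℕ) = (m:ℕ)-1 then w k else 0) := by
        intro k; congr 1
        simp only [eq_iff_iff]; omega
      rw [Finset.sum_congr rfl (fun k _ => this k), sum_ite_val,
        dif_pos (lt_of_le_of_lt (Nat.sub_le _ _) m.isLt)]
    · rw [dif_neg h]
      apply Finset.sum_eq_zero
      intro k _
      rw [if_neg]; omega
  · by_cases h : (m:ℕ) = 0
    · simp only [if_pos h]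
      rw [sum_ite_val, dif_pos (Nat.sub_lt hn Nat.one_pos)]
    · simp only [if_neg h, Finset.sum_const_zero]
  · rw [sum_ite_val]
  · by_cases h : (m:ℕ) = n - 1
    · simp only [if_pos h]
      rw [sum_ite_val, dif_pos hn]
    · simp only [if_neg h, Finset.sum_const_zero]

def ζC (n : ℕ) : ℂ := Complex.exp (2*Real.pi*Complex.I/n)
def om (n : ℕ) (θ : DualNumber ℝ) : DualNumber ℂ :=
  dcexp (inl (θ.fst/n) + inr (θ.snd/n))

@[simp] lemma dcexp_fst (t : DualNumber ℝ) :
    (dcexp t).fst = Complex.exp (Complex.I * (t.fst:ℂ)) := by simp [dcexp]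
@[simp] lemma dcexp_snd (t : DualNumber ℝ) :
    (dcexp t).snd = Complex.I * (t.snd:ℂ) * Complex.exp (Complex.I * (t.fst:ℂ)) := by
  simp [dcexp]

lemma conj_exp_I (r : ℝ) :
    (starRingEnd ℂ) (Complex.exp (Complex.I * (r:ℂ))) = Complex.exp (-(Complex.I * (r:ℂ))) := by
  rw [← Complex.exp_conj]
  congr 1
  simp [Complex.conj_I]

lemma exp_I_mul_self (r : ℝ) :
    Complex.exp (Complex.I * (r:ℂ)) * Complex.exp (-(Complex.I * (r:ℂ))) = 1 := by
  rw [← Complex.exp_add]; simp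

lemma dcexp_unit (t : DualNumber ℝ) : dcexp t * dstar (dcexp t) = 1 := by
  apply TrivSqZeroExt.ext
  · simp only [fst_mul, dcexp_fst, dstar, fst_add, fst_inl, fst_inr, add_zero, fst_one]
    rw [conj_exp_I, exp_I_mul_self]
  · simp only [snd_mul', dstar, fst_add, fst_inl, fst_inr, add_zero, snd_add, snd_inl, snd_inr,
      zero_add, dcexp_fst, dcexp_snd, snd_one]
    rw [conj_exp_I]
    rw [map_mul, map_mul, Complex.conj_I, conj_exp_I, Complex.conj_ofReal]
    ring

lemma om_pow (n : ℕ) (hn : 0 < n) (θ : DualNumber ℝ) : (om n θ)^n = dcexp θ := by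
  rw [om, dcexp, dcexp, add_pow_dual]
  have hfst : (((θ.fst / n : ℝ) : ℂ)) = (θ.fst : ℂ)/n := by push_cast; ring
  have hn' : (n:ℂ) ≠ 0 := Nat.cast_ne_zero.mpr hn.ne'
  congr 1
  · congr 1
    rw [← Complex.exp_nat_mul]
    congr 1
    simp only [fst_add, fst_inl, fst_inr, add_zero]
    rw [hfst]
    field_simp
  · congr 1
    have h1 : Complex.exp (Complex.I * ((θ.fst/n : ℝ):ℂ)) ^ (n-1) *
        Complex.exp (Complex.I * ((θ.fst/n : ℝ):ℂ)) = Complex.exp (Complex.I * (θ.fst:ℂ)) := by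
      rw [← pow_succ, Nat.sub_add_cancel hn, ← Complex.exp_nat_mul]
      congr 1
      rw [hfst]; field_simp
    simp only [fst_add, fst_inl, fst_inr, add_zero, snd_add, snd_inl, snd_inr, zero_add]
    calc (n:ℂ) * Complex.exp (Complex.I * ((θ.fst/n : ℝ):ℂ))^(n-1) *
          (Complex.I * ((θ.snd/n : ℝ):ℂ) * Complex.exp (Complex.I * ((θ.fst/n : ℝ):ℂ)))
        = Complex.I * ((n:ℂ) * ((θ.snd/n : ℝ):ℂ)) *
            (Complex.exp (Complex.I * ((θ.fst/n : ℝ):ℂ))^(n-1) *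
              Complex.exp (Complex.I * ((θ.fst/n : ℝ):ℂ))) := by ring
      _ = Complex.I * (θ.snd:ℂ) * Complex.exp (Complex.I * (θ.fst:ℂ)) := by
          rw [h1]
          congr 2
          push_cast
          field_simp

def mu (n : ℕ) (θ : DualNumber ℝ) (j : ℕ) : DualNumber ℂ :=
  om n θ * inl ((ζC n)^j) + dstar (om n θ) * inl ((starRingEnd ℂ) ((ζC n)^j))

lemma exp_phi (n : ℕ) (hn : 0 < n) (θ : DualNumber ℝ) (j : ℕ) :
    Complex.exp (Complex.I * ((θ.fst/n : ℝ):ℂ)) * (ζC n)^j =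
      Complex.exp ((((θ.fst + 2*Real.pi*j)/n : ℝ):ℂ) * Complex.I) := by
  rw [ζC, ← Complex.exp_nat_mul, ← Complex.exp_add]
  congr 1
  have hn' : (n:ℂ) ≠ 0 := Nat.cast_ne_zero.mpr hn.ne'
  push_cast
  field_simp

lemma mu_eval (n : ℕ) (hn : 0 < n) (θ : DualNumber ℝ) (j : ℕ) :
    mu n θ j = inl ((2 * Real.cos ((θ.fst + 2 * Real.pi * j) / n) : ℝ) : ℂ) +
      inr (((-(2 * (θ.snd / n) * Real.sin ((θ.fst + 2 * Real.pi * j) / n)) : ℝ) : ℂ)) := by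
  set φ : ℝ := (θ.fst + 2 * Real.pi * j) / n with hφ
  have he := exp_phi n hn θ j
  rw [← hφ] at he
  apply TrivSqZeroExt.ext
  · simp only [mu, fst_add, fst_mul, fst_inl, fst_inr, add_zero, dstar, om, dcexp_fst]
    have hc : (starRingEnd ℂ) (Complex.exp (Complex.I * ((θ.fst/n : ℝ):ℂ))) *
        (starRingEnd ℂ) ((ζC n)^j) =
        (starRingEnd ℂ) (Complex.exp ((φ:ℂ) * Complex.I)) := by
      rw [← map_mul, he]
    rw [he, hc, Complex.add_conj, Complex.exp_ofReal_mul_I_re]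
    try push_cast
    try ring
  · simp only [mu, snd_add, snd_mul', fst_inl, snd_inl, fst_add, fst_inl, fst_inr, add_zero,
      snd_inr, mul_zero, zero_add, dstar, om, dcexp_fst, dcexp_snd]
    have h1 : Complex.I * ((θ.snd/n : ℝ):ℂ) * Complex.exp (Complex.I * ((θ.fst/n : ℝ):ℂ)) *
        (ζC n)^j = Complex.I * ((θ.snd/n : ℝ):ℂ) * Complex.exp ((φ:ℂ) * Complex.I) := by
      rw [mul_assoc, he]
    have h2 : (starRingEnd ℂ) (Complex.I * ((θ.snd/n : ℝ):ℂ) *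
          Complex.exp (Complex.I * ((θ.fst/n : ℝ):ℂ))) * (starRingEnd ℂ) ((ζC n)^j) =
        (starRingEnd ℂ) (Complex.I * ((θ.snd/n : ℝ):ℂ) * Complex.exp ((φ:ℂ) * Complex.I)) := by
      rw [← map_mul, mul_assoc, he]
    rw [h1, h2, Complex.add_conj]
    have h3 : (Complex.I * ((θ.snd/n : ℝ):ℂ) * Complex.exp ((φ:ℂ) * Complex.I)).re
        = -(θ.snd/n * Real.sin φ) := by
      simp [Complex.mul_re, Complex.exp_ofReal_mul_I_re, Complex.exp_ofReal_mul_I_im]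
    rw [h3]
    push_cast
    ring

lemma zeta_ne (n : ℕ) : ζC n ≠ 0 := Complex.exp_ne_zero _

lemma conj_zeta (n : ℕ) : (starRingEnd ℂ) (ζC n) = (ζC n)⁻¹ := by
  rw [ζC, ← Complex.exp_conj, ← Complex.exp_neg]
  congr 1
  rw [map_div₀, map_mul, map_mul, Complex.conj_I, Complex.conj_ofReal, map_natCast, map_ofNat]
  ring

lemma zeta_pow_n (n : ℕ) (hn : 0 < n) : (ζC n)^n = 1 :=
  (Complex.isPrimitiveRoot_exp n hn.ne').pow_eq_one

lemma dft (n : ℕ) (hn : 0 < n) (m k : Fin n) :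
    ∑ j : Fin n, ((ζC n)^(m:ℕ) * ((starRingEnd ℂ) (ζC n))^(k:ℕ))^(j:ℕ) =
      if m = k then (n:ℂ) else 0 := by
  rw [conj_zeta]
  by_cases h : m = k
  · subst h
    have h1 : (ζC n)^(m:ℕ) * ((ζC n)⁻¹)^(m:ℕ) = 1 := by
      rw [inv_pow, mul_inv_cancel₀ (pow_ne_zero _ (zeta_ne n))]
    rw [if_pos rfl]
    calc ∑ j : Fin n, ((ζC n)^(m:ℕ) * ((ζC n)⁻¹)^(m:ℕ))^(j:ℕ)
        = ∑ _j : Fin n, (1:ℂ) := Finset.sum_congr rfl (fun j _ => by rw [h1, one_pow])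
      _ = n := by simp
  · rw [if_neg h]
    set x : ℂ := (ζC n)^(m:ℕ) * ((ζC n)⁻¹)^(k:ℕ) with hx
    have hxn : x^n = 1 := by
      rw [hx, mul_pow, ← pow_mul, ← pow_mul, mul_comm (m:ℕ) n, mul_comm (k:ℕ) n,
        pow_mul, pow_mul, zeta_pow_n n hn, inv_pow, zeta_pow_n n hn]
      simp
    have hx1 : x ≠ 1 := by
      intro hx1
      apply h
      have : (ζC n)^(m:ℕ) = (ζC n)^(k:ℕ) := by
        have hk : ((ζC n)^(k:ℕ)) ≠ 0 := pow_ne_zero _ (zeta_ne n)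
        rw [hx, inv_pow] at hx1
        exact (mul_inv_eq_one₀ hk).mp hx1
      exact Fin.ext ((Complex.isPrimitiveRoot_exp n hn.ne').pow_inj m.isLt k.isLt this)
    rw [Fin.sum_univ_eq_sum_range (fun j => x^j) n, geom_sum_eq hx1, hxn]
    simp

lemma dft_inv (n : ℕ) (hn : 0 < n) (y : Fin n → ℂ)
    (h : ∀ j : Fin n, ∑ k : Fin n, ((starRingEnd ℂ) (ζC n))^((j:ℕ)*(k:ℕ)) * y k = 0)
    (m : Fin n) : y m = 0 := by
  have h2 : ∑ j : Fin n, (((ζC n)^(m:ℕ))^(j:ℕ) *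
      ∑ k : Fin n, ((starRingEnd ℂ) (ζC n))^((j:ℕ)*(k:ℕ)) * y k) = 0 := by
    apply Finset.sum_eq_zero
    intro j _
    rw [h j, mul_zero]
  have h3 : ∑ j : Fin n, (((ζC n)^(m:ℕ))^(j:ℕ) *
      ∑ k : Fin n, ((starRingEnd ℂ) (ζC n))^((j:ℕ)*(k:ℕ)) * y k)
      = ∑ k : Fin n, (∑ j : Fin n,
          ((ζC n)^(m:ℕ) * ((starRingEnd ℂ) (ζC n))^(k:ℕ))^(j:ℕ)) * y k := by
    simp only [Finset.mul_sum]
    rw [Finset.sum_comm]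
    apply Finset.sum_congr rfl
    intro k _
    rw [Finset.sum_mul]
    apply Finset.sum_congr rfl
    intro j _
    have hp : ((starRingEnd ℂ) (ζC n))^((j:ℕ)*(k:ℕ))
        = (((starRingEnd ℂ) (ζC n))^(k:ℕ))^(j:ℕ) := by
      rw [← pow_mul, mul_comm]
    rw [hp, mul_pow]
    ring
  rw [h3] at h2
  have h4 : ∀ k : Fin n, (∑ j : Fin n,
      ((ζC n)^(m:ℕ) * ((starRingEnd ℂ) (ζC n))^(k:ℕ))^(j:ℕ)) * y k
      = (if m = k then (n:ℂ) else 0) * y k := by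
    intro k; rw [dft n hn m k]
  rw [Finset.sum_congr rfl (fun k _ => h4 k)] at h2
  simp only [ite_mul, zero_mul] at h2
  rw [Finset.sum_ite_eq (Finset.univ : Finset (Fin n)) m (fun k => (n:ℂ) * y k)] at h2
  simp only [Finset.mem_univ, if_true] at h2
  have hn' : (n:ℂ) ≠ 0 := Nat.cast_ne_zero.mpr hn.ne'
  exact (mul_eq_zero.mp h2).resolve_left hn'

-- eigen-relation helpers
lemma hw_inl (n : ℕ) (hn : 0 < n) (j : ℕ) :
    (inl ((ζC n)^j) : DualNumber ℂ) * inl ((starRingEnd ℂ) ((ζC n)^j)) = 1 := by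
  rw [inl_mul_inl]
  rw [map_pow, conj_zeta, inv_pow, mul_inv_cancel₀ (pow_ne_zero _ (zeta_ne n))]
  exact inl_one ℂ

lemma hwn_inl (n : ℕ) (hn : 0 < n) (j : ℕ) :
    ((inl ((ζC n)^j) : DualNumber ℂ))^n = 1 := by
  rw [inl_pow, ← pow_mul, mul_comm j n, pow_mul, zeta_pow_n n hn, one_pow]
  exact inl_one ℂ

lemma hwn_inl' (n : ℕ) (hn : 0 < n) (j : ℕ) :
    ((inl ((starRingEnd ℂ) ((ζC n)^j)) : DualNumber ℂ))^n = 1 := by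
  rw [inl_pow, ← map_pow, ← pow_mul, mul_comm j n, pow_mul, zeta_pow_n n hn, one_pow, map_one]
  exact inl_one ℂ

lemma om_unit (n : ℕ) (θ : DualNumber ℝ) : om n θ * dstar (om n θ) = 1 :=
  dcexp_unit _

lemma hp_om (n : ℕ) (hn : 0 < n) (θ : DualNumber ℝ) : dcexp θ = (om n θ)^n :=
  (om_pow n hn θ).symm

lemma hp_om' (n : ℕ) (hn : 0 < n) (θ : DualNumber ℝ) :
    dstar (dcexp θ) = (dstar (om n θ))^n := by
  rw [← dstar_pow, om_pow n hn θ]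

lemma om_fst_ne (n : ℕ) (θ : DualNumber ℝ) : (om n θ).fst ≠ 0 := by
  rw [om, dcexp_fst]
  exact Complex.exp_ne_zero _

-- the right eigenvector relation
lemma right_eig (n : ℕ) (hn : 0 < n) (θ : DualNumber ℝ) (j : ℕ) (i : Fin n) :
    ((cycMat n (dcexp θ) + dconjT (cycMat n (dcexp θ))).mulVec
        (fun k => (om n θ * inl ((ζC n)^j))^(k:ℕ))) i =
      (om n θ * inl ((ζC n)^j))^(i:ℕ) * mu n θ j := by
  rw [mulVec_A n hn]
  simp only [Fin.val_mk, dite_eq_ite, mu]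
  have h := row_id n (i:ℕ) i.isLt (om n θ) (dstar (om n θ)) (inl ((ζC n)^j))
    (inl ((starRingEnd ℂ) ((ζC n)^j))) (dcexp θ) (dstar (dcexp θ))
    (om_unit n θ) (hw_inl n hn j) (hwn_inl n hn j) (hp_om n hn θ) (hp_om' n hn θ)
  linear_combination h

-- the left eigenvector relation
lemma left_eig (n : ℕ) (hn : 0 < n) (θ : DualNumber ℝ) (j : ℕ) (m : Fin n) :
    (∑ k : Fin n, (cycMat n (dcexp θ) + dconjT (cycMat n (dcexp θ))) k m *
        (dstar (om n θ) * inl ((starRingEnd ℂ) ((ζC n)^j)))^(k:ℕ)) =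
      (dstar (om n θ) * inl ((starRingEnd ℂ) ((ζC n)^j)))^(m:ℕ) * mu n θ j := by
  rw [sum_At n hn]
  simp only [Fin.val_mk, dite_eq_ite, mu]
  have hω' : dstar (om n θ) * om n θ = 1 := by rw [mul_comm]; exact om_unit n θ
  have hw' : (inl ((starRingEnd ℂ) ((ζC n)^j)) : DualNumber ℂ) * inl ((ζC n)^j) = 1 := by
    rw [mul_comm]; exact hw_inl n hn j
  have h := row_id n (m:ℕ) m.isLt (dstar (om n θ)) (om n θ)
    (inl ((starRingEnd ℂ) ((ζC n)^j))) (inl ((ζC n)^j))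
    (dstar (dcexp θ)) (dcexp θ)
    hω' hw' (hwn_inl' n hn j) (hp_om' n hn θ) (hp_om n hn θ)
  linear_combination h

end CycProof

open CycProof in
/-- The eigenvalues of the dual complex Hermitian matrix `A = P + P*`, where `P` is the
cycle matrix with unit gain `p = e^{iθ}`, are exactly the dual cosines
`2 cos((θ + 2πj)/n)` for `j = 0, …, n-1`. -/
theorem cycle_adjacency_eigenvalues (n : ℕ) (hn : 0 < n) (θ : DualNumber ℝ)
    (lam : DualNumber ℂ) :
    (∃ x : Fin n → DualNumber ℂ, (fun i => (x i).fst) ≠ 0 ∧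
        (cycMat n (dcexp θ) + dconjT (cycMat n (dcexp θ))).mulVec x =
          fun i => x i * lam) ↔
      ∃ j : ℕ, j < n ∧
        lam = inl ((2 * Real.cos ((θ.fst + 2 * Real.pi * j) / n) : ℝ) : ℂ) +
          inr (((-(2 * (θ.snd / n) * Real.sin ((θ.fst + 2 * Real.pi * j) / n)) : ℝ) : ℂ)) := by
  constructor
  · rintro ⟨x, hx0, heig⟩
    set A := cycMat n (dcexp θ) + dconjT (cycMat n (dcexp θ)) with hA
    set v : Fin n → Fin n → DualNumber ℂ :=
      fun j k => (dstar (om n θ) * inl ((starRingEnd ℂ) ((ζC n)^(j:ℕ))))^(k:ℕ) with hv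
    set z : Fin n → DualNumber ℂ := fun j => ∑ k : Fin n, v j k * x k with hz
    -- the key scalar relation
    have key : ∀ j : Fin n, lam * z j = mu n θ (j:ℕ) * z j := by
      intro j
      have c1 : z j * lam = ∑ k : Fin n, v j k * (x k * lam) := by
        rw [hz, Finset.sum_mul]
        exact Finset.sum_congr rfl (fun k _ => by ring)
      have c2 : ∑ k : Fin n, v j k * (x k * lam) = ∑ k : Fin n, v j k * (A.mulVec x) k := by
        apply Finset.sum_congr rfl
        intro k _
        rw [heig]
      have c3 : ∑ k : Fin n, v j k * (A.mulVec x) k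
          = ∑ m : Fin n, (∑ k : Fin n, A k m * v j k) * x m := by
        simp only [Matrix.mulVec, dotProduct, Finset.mul_sum]
        rw [Finset.sum_comm]
        apply Finset.sum_congr rfl
        intro m _
        rw [Finset.sum_mul]
        exact Finset.sum_congr rfl (fun k _ => by ring)
      have c4 : ∑ m : Fin n, (∑ k : Fin n, A k m * v j k) * x m
          = ∑ m : Fin n, (v j m * mu n θ (j:ℕ)) * x m := by
        apply Finset.sum_congr rfl
        intro m _
        rw [left_eig n hn θ (j:ℕ) m]
      have c5 : ∑ m : Fin n, (v j m * mu n θ (j:ℕ)) * x m = mu n θ (j:ℕ) * z j := by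
        rw [hz, Finset.mul_sum]
        exact Finset.sum_congr rfl (fun m _ => by ring)
      calc lam * z j = z j * lam := by ring
        _ = mu n θ (j:ℕ) * z j := by rw [c1, c2, c3, c4, c5]
    -- find an appreciable component
    have hex : ∃ j : Fin n, (z j).fst ≠ 0 := by
      by_contra hall
      push_neg at hall
      apply hx0
      funext m
      have hyz : ∀ j : Fin n, ∑ k : Fin n, ((starRingEnd ℂ) (ζC n))^((j:ℕ)*(k:ℕ)) *
          (((starRingEnd ℂ) ((om n θ).fst))^(k:ℕ) * (x k).fst) = 0 := by
        intro j
        have h1 := hall j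
        rw [hz] at h1
        rw [fst_sum] at h1
        rw [← h1]
        apply Finset.sum_congr rfl
        intro k _
        rw [hv]
        simp only [fst_mul, fst_pow, dstar_fst, fst_inl]
        rw [map_pow, mul_pow, ← pow_mul]
        ring
      have hy := dft_inv n hn _ hyz m
      have : (x m).fst = 0 := by
        rcases mul_eq_zero.mp hy with h | h
        · exact absurd h (pow_ne_zero _ ((map_ne_zero _).mpr (om_fst_ne n θ)))
        · exact h
      simpa using this
    obtain ⟨j, hj⟩ := hex
    refine ⟨(j:ℕ), j.isLt, ?_⟩
    have hlam : lam = mu n θ (j:ℕ) := by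
      apply dual_cancel hj
      rw [key j]
    rw [hlam, mu_eval n hn θ (j:ℕ)]
  · rintro ⟨j, hj, hlam⟩
    refine ⟨fun k => (om n θ * inl ((ζC n)^j))^(k:ℕ), ?_, ?_⟩
    · intro h
      have h0 := congrFun h ⟨0, hn⟩
      simp at h0
    · funext i
      rw [right_eig n hn θ j i]
      rw [hlam, mu_eval n hn θ j]
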